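/- Assume ξ and η are mutually singular. Let s ∈ ℝ satisfy ξ{s} = 0 and η{s} = 0. Then τ*(ζ(s)) < ∞ if and only if τ⁰(s) < ∞, and in that case ζ⁻¹(τ*(ζ(s))) = τ⁰(s). -/

import Mathlib

open MeasureTheory

/-- The purely atomic part `μ^d` of a measure on `ℝ`. -/
noncomputable def atomicPart (μ : Measure ℝ) : Measure ℝ :=
  μ.restrict {t : ℝ | μ {t} ≠ 0}

/-- The diffuse part `μ^c` of a measure on `ℝ`. -/
noncomputable def diffusePart (μ : Measure ℝ) : Measure ℝ :=
  μ.restrict {t : ℝ | μ {t} = 0}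

/-- The time change `ζ`. -/
noncomputable def zeta (ξ η : Measure ℝ) (s : ℝ) : ℝ :=
  if 0 ≤ s then
    s + (atomicPart ξ (Set.Ico 0 s)).toReal + (atomicPart η (Set.Ico 0 s)).toReal
  else
    s - (atomicPart ξ (Set.Ico s 0)).toReal - (atomicPart η (Set.Ico s 0)).toReal

/-- The generalized inverse `ζ⁻¹` of the time change `ζ`. -/
noncomputable def zetaInv (ξ η : Measure ℝ) (t : ℝ) : ℝ :=
  sInf {s : ℝ | t ≤ zeta ξ η s}

/-- The stretched measure `μ*` built from `μ` using the time change `ζ` of `(ξ, η)`. -/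
noncomputable def starM (ξ η μ : Measure ℝ) : Measure ℝ :=
  (diffusePart μ).map (zeta ξ η) +
    (atomicPart μ).bind fun t =>
      (μ {t})⁻¹ • volume.restrict (Set.Icc (zeta ξ η t) (zeta ξ η t + (μ {t}).toReal))

/-- `τ^u(s) := inf{t > s : u ξ{s} + ξ((s,t)) ≤ η[s,t]}`, with `inf ∅ = ∞`. -/
noncomputable def tauU (ξ η : Measure ℝ) (u s : ℝ) : EReal :=
  sInf (Real.toEReal ''
    {t : ℝ | s < t ∧ ENNReal.ofReal u * ξ {s} + ξ (Set.Ioo s t) ≤ η (Set.Icc s t)})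

/-- `τ*(r) := inf{t > r : ξ*[r,t] ≤ η*[r,t]}`, with `inf ∅ = ∞`. -/
noncomputable def tauStar (ξ η : Measure ℝ) (r : ℝ) : EReal :=
  sInf (Real.toEReal ''
    {t : ℝ | r < t ∧ starM ξ η ξ (Set.Icc r t) ≤ starM ξ η η (Set.Icc r t)})

section AuxLemmas
open Set

lemma atoms_countable (μ : Measure ℝ) [SigmaFinite μ] :
    Set.Countable {t : ℝ | μ {t} ≠ 0} := by
  have := MeasureTheory.Measure.countable_meas_pos_of_disjoint_iUnion (μ := μ)
    (As := fun t : ℝ => {t}) (fun t => measurableSet_singleton t)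
    (fun a b hab => by simpa [Function.onFun] using hab)
  simpa [pos_iff_ne_zero] using this

lemma atoms_measurable (μ : Measure ℝ) [SigmaFinite μ] :
    MeasurableSet {t : ℝ | μ {t} ≠ 0} :=
  (atoms_countable μ).measurableSet

lemma atomicPart_singleton (μ : Measure ℝ) [SigmaFinite μ] (t : ℝ) :
    atomicPart μ {t} = μ {t} := by
  rw [atomicPart, Measure.restrict_apply (measurableSet_singleton t)]
  by_cases h : μ {t} = 0
  · rw [Set.singleton_inter_eq_empty.2 (by simpa using h)]
    simpa using h.symm
  · congr 1
    exact Set.inter_eq_self_of_subset_left (by simpa using h)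

lemma atomicPart_mono (μ : Measure ℝ) {A B : Set ℝ} (h : A ⊆ B) :
    atomicPart μ A ≤ atomicPart μ B := measure_mono h

lemma atomicPart_Ico_ne_top (μ : Measure ℝ) [IsLocallyFiniteMeasure μ] (a b : ℝ) :
    atomicPart μ (Set.Ico a b) ≠ ⊤ := by
  refine ne_of_lt (lt_of_le_of_lt ?_ (measure_Icc_lt_top (a := a) (b := b) (μ := μ)))
  exact le_trans (Measure.restrict_le_self _) (measure_mono Set.Ico_subset_Icc_self)

lemma diffusePart_singleton (μ : Measure ℝ) [SigmaFinite μ] (t : ℝ) :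
    diffusePart μ {t} = 0 := by
  rw [diffusePart, Measure.restrict_apply (measurableSet_singleton t)]
  by_cases h : μ {t} = 0
  · exact le_antisymm (le_trans (measure_mono Set.inter_subset_left) h.le) bot_le
  · rw [Set.singleton_inter_eq_empty.2 (by simpa using h)]
    simp

lemma parts_add (μ : Measure ℝ) [SigmaFinite μ] {A : Set ℝ} (hA : MeasurableSet A) :
    diffusePart μ A + atomicPart μ A = μ A := by
  rw [diffusePart, atomicPart, Measure.restrict_apply hA, Measure.restrict_apply hA]
  rw [← measure_union ?_ (hA.inter (atoms_measurable μ))]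
  · congr 1
    ext x
    by_cases h : μ {x} = 0 <;> simp [h]
  · refine Set.disjoint_of_subset Set.inter_subset_right Set.inter_subset_right ?_
    rw [Set.disjoint_left]
    intro x hx
    simpa using hx

noncomputable def gfun (μ : Measure ℝ) (s : ℝ) : ℝ :=
  if 0 ≤ s then (atomicPart μ (Set.Ico 0 s)).toReal else -(atomicPart μ (Set.Ico s 0)).toReal

lemma zeta_eq_gfun (ξ η : Measure ℝ) (s : ℝ) :
    zeta ξ η s = s + gfun ξ s + gfun η s := by
  rw [zeta, gfun, gfun]
  by_cases h : 0 ≤ s <;> simp [h] <;> ring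

lemma measure_Ico_add (ν : Measure ℝ) {a b c : ℝ} (hab : a ≤ b) (hbc : b ≤ c) :
    ν (Set.Ico a c) = ν (Set.Ico a b) + ν (Set.Ico b c) := by
  rw [← Set.Ico_union_Ico_eq_Ico hab hbc,
    measure_union (Set.Ico_disjoint_Ico_same) measurableSet_Ico]

lemma gfun_diff (μ : Measure ℝ) [IsLocallyFiniteMeasure μ] {u t : ℝ} (h : u ≤ t) :
    gfun μ t = gfun μ u + (atomicPart μ (Set.Ico u t)).toReal := by
  have fin : ∀ a b : ℝ, atomicPart μ (Set.Ico a b) ≠ ⊤ := atomicPart_Ico_ne_top μ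
  rw [gfun, gfun]
  rcases le_or_gt 0 u with hu | hu
  · have ht : 0 ≤ t := le_trans hu h
    rw [if_pos hu, if_pos ht, measure_Ico_add (atomicPart μ) hu h,
      ENNReal.toReal_add (fin _ _) (fin _ _)]
  · rcases le_or_gt 0 t with ht | ht
    · rw [if_pos ht, if_neg (not_le.2 hu), measure_Ico_add (atomicPart μ) hu.le ht,
        ENNReal.toReal_add (fin _ _) (fin _ _)]
      ring
    · rw [if_neg (not_le.2 hu), if_neg (not_le.2 ht),
        measure_Ico_add (atomicPart μ) h ht.le, ENNReal.toReal_add (fin _ _) (fin _ _)]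
      ring

lemma zeta_diff (ξ η : Measure ℝ) [IsLocallyFiniteMeasure ξ] [IsLocallyFiniteMeasure η]
    {u t : ℝ} (h : u ≤ t) :
    zeta ξ η t = zeta ξ η u + (t - u)
      + (atomicPart ξ (Set.Ico u t)).toReal + (atomicPart η (Set.Ico u t)).toReal := by
  rw [zeta_eq_gfun, zeta_eq_gfun, gfun_diff ξ h, gfun_diff η h]
  ring

lemma zeta_strictMono (ξ η : Measure ℝ) [IsLocallyFiniteMeasure ξ] [IsLocallyFiniteMeasure η] :
    StrictMono (zeta ξ η) := by
  intro u t h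
  rw [zeta_diff ξ η h.le]
  have h1 : (0:ℝ) ≤ (atomicPart ξ (Set.Ico u t)).toReal := ENNReal.toReal_nonneg
  have h2 : (0:ℝ) ≤ (atomicPart η (Set.Ico u t)).toReal := ENNReal.toReal_nonneg
  linarith

lemma zeta_mono (ξ η : Measure ℝ) [IsLocallyFiniteMeasure ξ] [IsLocallyFiniteMeasure η] :
    Monotone (zeta ξ η) := (zeta_strictMono ξ η).monotone

/-- the right limit of `zeta` at `t` -/
noncomputable def zetaR (ξ η : Measure ℝ) (t : ℝ) : ℝ :=
  zeta ξ η t + (ξ {t}).toReal + (η {t}).toReal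

lemma zeta_le_zetaR (ξ η : Measure ℝ) (t : ℝ) : zeta ξ η t ≤ zetaR ξ η t := by
  have h1 : (0:ℝ) ≤ (ξ {t}).toReal := ENNReal.toReal_nonneg
  have h2 : (0:ℝ) ≤ (η {t}).toReal := ENNReal.toReal_nonneg
  rw [zetaR]; linarith

lemma toReal_singleton_le_Ico (μ : Measure ℝ) [IsLocallyFiniteMeasure μ] {u t : ℝ} (h : u < t) :
    (μ {u}).toReal ≤ (atomicPart μ (Set.Ico u t)).toReal := by
  have := atomicPart_singleton μ u
  refine ENNReal.toReal_mono (atomicPart_Ico_ne_top μ u t) ?_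
  rw [← this]
  exact measure_mono (by simp [h])

lemma zetaR_add_le_zeta (ξ η : Measure ℝ) [IsLocallyFiniteMeasure ξ] [IsLocallyFiniteMeasure η]
    {u t : ℝ} (h : u < t) : zetaR ξ η u + (t - u) ≤ zeta ξ η t := by
  rw [zeta_diff ξ η h.le, zetaR]
  have h1 := toReal_singleton_le_Ico ξ h
  have h2 := toReal_singleton_le_Ico η h
  linarith

lemma tendsto_Ico_left (ν : Measure ℝ) (hfin : ∀ a b : ℝ, ν (Set.Ico a b) ≠ ⊤) (t : ℝ) :
    Filter.Tendsto (fun n : ℕ => (ν (Set.Ico (t - 1/(n+1)) t)).toReal)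
      Filter.atTop (nhds 0) := by
  have hanti : Antitone (fun n : ℕ => Set.Ico (t - 1/(n+1)) t) := by
    intro m n hmn
    apply Set.Ico_subset_Ico_left
    have h1 : (1:ℝ)/(n+1) ≤ 1/(m+1) := by
      apply one_div_le_one_div_of_le (by positivity)
      exact_mod_cast by omega
    linarith
  have hint : (⋂ n : ℕ, Set.Ico (t - 1/(n+1)) t) = ∅ := by
    ext x
    simp only [Set.mem_iInter, Set.mem_Ico, Set.mem_empty_iff_false, iff_false, not_forall]
    by_cases hx : x < t
    · obtain ⟨n, hn⟩ := exists_nat_gt (1/(t - x))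
      refine ⟨n, fun h => ?_⟩
      have hpos : 0 < t - x := by linarith
      have h2 : 1/(t-x) < (n:ℝ)+1 := by push_cast at hn ⊢; linarith
      have h3 : 1/((n:ℝ)+1) < t - x := by
        rw [div_lt_iff₀ (by positivity)]
        rw [div_lt_iff₀ hpos] at h2
        linarith
      linarith [h.1]
    · exact ⟨0, fun h => hx h.2⟩
  have := tendsto_measure_iInter_atTop (μ := ν)
    (fun n => measurableSet_Ico.nullMeasurableSet) hanti ⟨0, hfin _ _⟩
  rw [hint] at this
  simp only [measure_empty] at this
  have h2 := (ENNReal.tendsto_toReal (a := 0) (by simp)).comp this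
  exact h2

lemma tendsto_Ico_right (ν : Measure ℝ) (hfin : ∀ a b : ℝ, ν (Set.Ico a b) ≠ ⊤) (t : ℝ) :
    Filter.Tendsto (fun n : ℕ => (ν (Set.Ico t (t + 1/(n+1)))).toReal)
      Filter.atTop (nhds (ν {t}).toReal) := by
  have hanti : Antitone (fun n : ℕ => Set.Ico t (t + 1/(n+1))) := by
    intro m n hmn
    apply Set.Ico_subset_Ico_right
    have h1 : (1:ℝ)/(n+1) ≤ 1/(m+1) := by
      apply one_div_le_one_div_of_le (by positivity)
      exact_mod_cast by omega
    linarith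
  have hint : (⋂ n : ℕ, Set.Ico t (t + 1/(n+1))) = {t} := by
    ext x
    simp only [Set.mem_iInter, Set.mem_Ico, Set.mem_singleton_iff]
    constructor
    · intro h
      by_contra hx
      have hlt : t < x := lt_of_le_of_ne (h 0).1 (Ne.symm hx)
      obtain ⟨n, hn⟩ := exists_nat_gt (1/(x - t))
      have hpos : 0 < x - t := by linarith
      have h2 : 1/(x-t) < (n:ℝ)+1 := by push_cast at hn ⊢; linarith
      have h3 : 1/((n:ℝ)+1) < x - t := by
        rw [div_lt_iff₀ (by positivity)]
        rw [div_lt_iff₀ hpos] at h2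
        linarith
      linarith [(h n).2]
    · rintro rfl
      refine fun n => ⟨le_rfl, ?_⟩
      have : (0:ℝ) < 1/(n+1) := by positivity
      linarith
  have := tendsto_measure_iInter_atTop (μ := ν)
    (fun n => measurableSet_Ico.nullMeasurableSet) hanti ⟨0, hfin _ _⟩
  rw [hint] at this
  have hne : ν {t} ≠ ⊤ := by
    refine ne_of_lt (lt_of_le_of_lt (measure_mono ?_) (lt_of_le_of_lt (le_of_eq rfl)
      (lt_top_iff_ne_top.2 (hfin t (t+1)))))
    intro x hx
    simp only [Set.mem_singleton_iff] at hx
    subst hx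
    exact ⟨le_rfl, by linarith⟩
  have h2 := (ENNReal.tendsto_toReal hne).comp this
  exact h2

lemma atomicPart_Ico_fin (μ : Measure ℝ) [IsLocallyFiniteMeasure μ] :
    ∀ a b : ℝ, atomicPart μ (Set.Ico a b) ≠ ⊤ := atomicPart_Ico_ne_top μ

lemma zeta_left_approx (ξ η : Measure ℝ) [IsLocallyFiniteMeasure ξ] [IsLocallyFiniteMeasure η]
    (t : ℝ) {ε : ℝ} (hε : 0 < ε) : ∃ u < t, zeta ξ η t < zeta ξ η u + ε := by
  have hξ := tendsto_Ico_left (atomicPart ξ) (atomicPart_Ico_fin ξ) t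
  have hη := tendsto_Ico_left (atomicPart η) (atomicPart_Ico_fin η) t
  have h0 : Filter.Tendsto (fun n : ℕ => (1:ℝ)/(n+1)) Filter.atTop (nhds 0) :=
    tendsto_one_div_add_atTop_nhds_zero_nat
  have hsum := (h0.add hξ).add hη
  rw [show (0:ℝ) + 0 + 0 = 0 by ring] at hsum
  obtain ⟨n, hn⟩ := (hsum.eventually (eventually_lt_nhds hε)).exists
  have hp : (0:ℝ) < 1/(n+1) := by positivity
  refine ⟨t - 1/(n+1), by linarith, ?_⟩
  have hd := zeta_diff ξ η (u := t - 1/(n+1)) (t := t) (by linarith)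
  rw [hd]
  have he : t - (t - 1/(n+1)) = 1/(n+1 : ℝ) := by ring
  rw [he]
  linarith [hn]

lemma zeta_right_approx (ξ η : Measure ℝ) [IsLocallyFiniteMeasure ξ] [IsLocallyFiniteMeasure η]
    (t : ℝ) {ε : ℝ} (hε : 0 < ε) : ∃ u > t, zeta ξ η u < zetaR ξ η t + ε := by
  have hξ := tendsto_Ico_right (atomicPart ξ) (atomicPart_Ico_fin ξ) t
  have hη := tendsto_Ico_right (atomicPart η) (atomicPart_Ico_fin η) t
  rw [atomicPart_singleton ξ t] at hξ
  rw [atomicPart_singleton η t] at hη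
  have h0 : Filter.Tendsto (fun n : ℕ => (1:ℝ)/(n+1)) Filter.atTop (nhds 0) :=
    tendsto_one_div_add_atTop_nhds_zero_nat
  have hsum := (h0.add hξ).add hη
  obtain ⟨n, hn⟩ := (hsum.eventually (eventually_lt_nhds
    (show 0 + (ξ {t}).toReal + (η {t}).toReal < (ξ {t}).toReal + (η {t}).toReal + ε
      by linarith))).exists
  have hp : (0:ℝ) < 1/(n+1) := by positivity
  refine ⟨t + 1/(n+1), by linarith, ?_⟩
  have hd := zeta_diff ξ η (u := t) (t := t + 1/(n+1)) (by linarith)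
  rw [hd, zetaR]
  have he : t + 1/(n+1) - t = 1/(n+1 : ℝ) := by ring
  rw [he]
  linarith [hn]

section ZetaInv

variable (ξ η : Measure ℝ) [IsLocallyFiniteMeasure ξ] [IsLocallyFiniteMeasure η]

lemma self_le_zeta {u : ℝ} (hu : 0 ≤ u) : u ≤ zeta ξ η u := by
  rw [zeta, if_pos hu]
  have h1 : (0:ℝ) ≤ (atomicPart ξ (Set.Ico 0 u)).toReal := ENNReal.toReal_nonneg
  have h2 : (0:ℝ) ≤ (atomicPart η (Set.Ico 0 u)).toReal := ENNReal.toReal_nonneg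
  linarith

lemma zeta_le_self {u : ℝ} (hu : u < 0) : zeta ξ η u ≤ u := by
  rw [zeta, if_neg (not_le.2 hu)]
  have h1 : (0:ℝ) ≤ (atomicPart ξ (Set.Ico u 0)).toReal := ENNReal.toReal_nonneg
  have h2 : (0:ℝ) ≤ (atomicPart η (Set.Ico u 0)).toReal := ENNReal.toReal_nonneg
  linarith

lemma zetaSet_nonempty (v : ℝ) : {u : ℝ | v ≤ zeta ξ η u}.Nonempty := by
  refine ⟨max v 0, ?_⟩
  have := self_le_zeta ξ η (u := max v 0) (le_max_right v 0)
  simp only [Set.mem_setOf_eq]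
  exact le_trans (le_max_left v 0) this

lemma zetaSet_bddBelow (v : ℝ) : BddBelow {u : ℝ | v ≤ zeta ξ η u} := by
  refine ⟨min v 0, fun u hu => ?_⟩
  simp only [Set.mem_setOf_eq] at hu
  rcases le_or_gt 0 u with h | h
  · exact le_trans (min_le_right v 0) h
  · exact le_trans (min_le_left v 0) (le_trans hu (zeta_le_self ξ η h))

lemma zetaInv_le {v u : ℝ} (h : v ≤ zeta ξ η u) : zetaInv ξ η v ≤ u :=
  csInf_le (zetaSet_bddBelow ξ η v) h

lemma zetaInv_mono : Monotone (zetaInv ξ η) := by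
  intro v v' h
  exact csInf_le_csInf (zetaSet_bddBelow ξ η v) (zetaSet_nonempty ξ η v')
    (fun u hu => le_trans h hu)

lemma zeta_zetaInv_le (v : ℝ) : zeta ξ η (zetaInv ξ η v) ≤ v := by
  by_contra h
  push_neg at h
  set t0 := zetaInv ξ η v with ht0
  obtain ⟨u, hu, hlt⟩ := zeta_left_approx ξ η t0 (sub_pos.2 h)
  have hv : v ≤ zeta ξ η u := by linarith
  have := zetaInv_le ξ η hv
  rw [← ht0] at this
  linarith

lemma le_zetaR_zetaInv (v : ℝ) : v ≤ zetaR ξ η (zetaInv ξ η v) := by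
  set t0 := zetaInv ξ η v with ht0
  have key : ∀ u, t0 < u → v ≤ zeta ξ η u := by
    intro u hu
    rw [ht0, zetaInv] at hu
    obtain ⟨w, hw, hwu⟩ := exists_lt_of_csInf_lt (zetaSet_nonempty ξ η v) hu
    exact le_trans hw ((zeta_mono ξ η) hwu.le)
  refine le_of_forall_pos_le_add (fun ε hε => ?_)
  obtain ⟨u, hu, hlt⟩ := zeta_right_approx ξ η t0 hε
  exact le_trans (key u hu) hlt.le

lemma zetaInv_zeta (t : ℝ) : zetaInv ξ η (zeta ξ η t) = t := by
  rw [zetaInv]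
  have : {u : ℝ | zeta ξ η t ≤ zeta ξ η u} = Set.Ici t := by
    ext u
    simpa using ((zeta_strictMono ξ η).le_iff_le (a := t) (b := u))
  rw [this, csInf_Ici]

lemma zetaInv_zetaR (t : ℝ) : zetaInv ξ η (zetaR ξ η t) = t := by
  refine le_antisymm ?_ ?_
  · refine le_of_forall_pos_le_add (fun ε hε => ?_)
    refine zetaInv_le ξ η (v := zetaR ξ η t) (u := t + ε) ?_
    have := zetaR_add_le_zeta ξ η (u := t) (t := t + ε) (by linarith)
    linarith
  · refine le_csInf (zetaSet_nonempty ξ η _) (fun u hu => ?_)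
    simp only [Set.mem_setOf_eq] at hu
    by_contra hc
    push_neg at hc
    have := (zeta_strictMono ξ η) hc
    have h2 := zeta_le_zetaR ξ η t
    linarith

lemma zetaR_le_zeta_of_le {s t : ℝ} (hξs : ξ {s} = 0) (hηs : η {s} = 0)
    (h : t ≤ s) : zetaR ξ η t ≤ zeta ξ η s := by
  rcases eq_or_lt_of_le h with rfl | hlt
  · rw [zetaR, hξs, hηs]
    simp
  · have := zetaR_add_le_zeta ξ η hlt
    linarith

lemma zetaInv_gt {v s : ℝ} (hξs : ξ {s} = 0) (hηs : η {s} = 0)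
    (hv : zeta ξ η s < v) : s < zetaInv ξ η v := by
  by_contra hc
  push_neg at hc
  have h1 := le_zetaR_zetaInv ξ η v
  have h2 := zetaR_le_zeta_of_le ξ η hξs hηs hc
  linarith

end ZetaInv

lemma measurable_of_countable_support {β : Type*} [MeasurableSpace β] {f : ℝ → β} {c : β}
    {D : Set ℝ} (hD : D.Countable) (h : ∀ a, a ∉ D → f a = c) : Measurable f := by
  intro A hA
  have hsplit : f ⁻¹' A = (f ⁻¹' A ∩ D) ∪ (f ⁻¹' A ∩ Dᶜ) := by
    rw [← Set.inter_union_distrib_left, Set.union_compl_self, Set.inter_univ]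
  rw [hsplit]
  refine MeasurableSet.union ((hD.mono Set.inter_subset_right).measurableSet) ?_
  by_cases hc : c ∈ A
  · have : f ⁻¹' A ∩ Dᶜ = Dᶜ := by
      refine Set.inter_eq_self_of_subset_right (fun a ha => ?_)
      simp only [Set.mem_preimage]
      rw [h a ha]
      exact hc
    rw [this]
    exact hD.measurableSet.compl
  · have : f ⁻¹' A ∩ Dᶜ = ∅ := by
      ext a
      simp only [Set.mem_inter_iff, Set.mem_preimage, Set.mem_compl_iff,
        Set.mem_empty_iff_false, iff_false, not_and]
      intro ha ha2
      rw [h a ha2] at ha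
      exact hc ha
    rw [this]
    exact MeasurableSet.empty

section StarMeasure

variable (ξ η : Measure ℝ) [IsLocallyFiniteMeasure ξ] [IsLocallyFiniteMeasure η]

lemma measure_singleton_ne_top (μ : Measure ℝ) [IsLocallyFiniteMeasure μ] (u : ℝ) :
    μ {u} ≠ ⊤ := by
  refine ne_of_lt (lt_of_le_of_lt (measure_mono ?_) (measure_Icc_lt_top (a := u) (b := u)))
  simp

/-- the kernel used in `starM` -/
noncomputable def starK (μ : Measure ℝ) (u : ℝ) : Measure ℝ :=
  (μ {u})⁻¹ • volume.restrict (Set.Icc (zeta ξ η u) (zeta ξ η u + (μ {u}).toReal))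

lemma starK_apply (μ : Measure ℝ) (u : ℝ) {C : Set ℝ} (hC : MeasurableSet C) :
    starK ξ η μ u C
      = (μ {u})⁻¹ * volume (C ∩ Set.Icc (zeta ξ η u) (zeta ξ η u + (μ {u}).toReal)) := by
  rw [starK, Measure.smul_apply, Measure.restrict_apply hC, smul_eq_mul]

lemma starK_zero (μ : Measure ℝ) {u : ℝ} (hu : μ {u} = 0) : starK ξ η μ u = 0 := by
  refine Measure.ext (fun C hC => ?_)
  rw [starK_apply ξ η μ u hC, hu]
  have : C ∩ Set.Icc (zeta ξ η u) (zeta ξ η u + (0:ENNReal).toReal) ⊆ {zeta ξ η u} := by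
    intro x hx
    simp only [ENNReal.toReal_zero, add_zero, Set.Icc_self] at hx
    exact hx.2
  have hv : volume (C ∩ Set.Icc (zeta ξ η u) (zeta ξ η u + (0:ENNReal).toReal)) = 0 :=
    le_antisymm (le_trans (measure_mono this) (by simp)) bot_le
  rw [hv, mul_zero]
  rfl

lemma starK_measurable (μ : Measure ℝ) [SigmaFinite μ] : Measurable (starK ξ η μ) :=
  measurable_of_countable_support (atoms_countable μ)
    (fun u hu => starK_zero ξ η μ (by simpa using hu))

lemma starM_eq (μ : Measure ℝ) [SigmaFinite μ] {C : Set ℝ} (hC : MeasurableSet C) :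
    starM ξ η μ C = diffusePart μ (zeta ξ η ⁻¹' C) + ∫⁻ u, starK ξ η μ u C ∂(atomicPart μ) := by
  have hk : (fun t : ℝ => (μ {t})⁻¹ • volume.restrict
      (Set.Icc (zeta ξ η t) (zeta ξ η t + (μ {t}).toReal))) = starK ξ η μ := rfl
  rw [starM, hk, Measure.add_apply,
    Measure.map_apply ((zeta_mono ξ η).measurable) hC,
    Measure.bind_apply hC (starK_measurable ξ η μ).aemeasurable]

end StarMeasure

section Eval

variable (ξ η : Measure ℝ) [IsLocallyFiniteMeasure ξ] [IsLocallyFiniteMeasure η]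

lemma zeta_preimage_Icc {s t : ℝ} :
    zeta ξ η ⁻¹' Set.Icc (zeta ξ η s) (zeta ξ η t) = Set.Icc s t := by
  ext u
  simp only [Set.mem_preimage, Set.mem_Icc]
  rw [(zeta_strictMono ξ η).le_iff_le, (zeta_strictMono ξ η).le_iff_le]

lemma zeta_preimage_IccR {s t : ℝ} (hst : s ≤ t) :
    zeta ξ η ⁻¹' Set.Icc (zeta ξ η s) (zetaR ξ η t) = Set.Icc s t := by
  ext u
  simp only [Set.mem_preimage, Set.mem_Icc]
  rw [(zeta_strictMono ξ η).le_iff_le]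
  constructor
  · rintro ⟨h1, h2⟩
    refine ⟨h1, ?_⟩
    by_contra hc
    push_neg at hc
    have := zetaR_add_le_zeta ξ η hc
    linarith
  · rintro ⟨h1, h2⟩
    exact ⟨h1, le_trans ((zeta_mono ξ η) h2) (zeta_le_zetaR ξ η t)⟩

variable (μ : Measure ℝ) [IsLocallyFiniteMeasure μ]
variable {s t : ℝ}

/-- evaluation of the kernel against `[ζ s, v]` for `ζ t ≤ v` suitable. -/
lemma starK_eval (hst : s ≤ t) {v : ℝ}
    (hv1 : zeta ξ η t ≤ v)
    (hatom : ∀ u t', u < t' → zeta ξ η u + (μ {u}).toReal ≤ zeta ξ η t')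
    (hvt : ∀ u, t < u → μ {u} ≠ 0 → v < zeta ξ η u)
    (htv : μ {t} ≠ 0 → zeta ξ η t + (μ {t}).toReal ≤ v)
    {u : ℝ} (hu : μ {u} ≠ 0) :
    starK ξ η μ u (Set.Icc (zeta ξ η s) v)
      = Set.indicator (Set.Icc s t) (fun _ => (1:ENNReal)) u := by
  have hufin : μ {u} ≠ ⊤ := measure_singleton_ne_top μ u
  have ha : (0:ℝ) ≤ (μ {u}).toReal := ENNReal.toReal_nonneg
  rw [starK_apply ξ η μ u measurableSet_Icc]
  rcases lt_trichotomy u t with hut | rfl | hut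
  · rcases lt_or_ge u s with hus | hsu
    · -- u < s : intersection is contained in a point
      have hsub : Set.Icc (zeta ξ η s) v
          ∩ Set.Icc (zeta ξ η u) (zeta ξ η u + (μ {u}).toReal) ⊆ {zeta ξ η s} := by
        intro x hx
        have h1 := hx.1.1
        have h2 := hx.2.2
        have h3 : zeta ξ η u + (μ {u}).toReal ≤ zeta ξ η s := hatom u s hus
        have : x = zeta ξ η s := le_antisymm (le_trans h2 h3) h1
        simp [this]
      have hvol : volume (Set.Icc (zeta ξ η s) v
          ∩ Set.Icc (zeta ξ η u) (zeta ξ η u + (μ {u}).toReal)) = 0 :=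
        le_antisymm (le_trans (measure_mono hsub) (by simp)) bot_le
      rw [hvol, mul_zero,
        Set.indicator_of_notMem (fun h => absurd (Set.mem_Icc.1 h).1 (not_le.2 hus))]
    · -- s ≤ u < t : full interval inside
      have hsub : Set.Icc (zeta ξ η u) (zeta ξ η u + (μ {u}).toReal)
          ⊆ Set.Icc (zeta ξ η s) v := by
        intro x hx
        exact ⟨le_trans ((zeta_mono ξ η) hsu) hx.1,
          le_trans hx.2 (le_trans (hatom u t hut) hv1)⟩
      rw [Set.inter_eq_self_of_subset_right hsub, Real.volume_Icc]
      have : zeta ξ η u + (μ {u}).toReal - zeta ξ η u = (μ {u}).toReal := by ring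
      rw [this, ENNReal.ofReal_toReal hufin, ENNReal.inv_mul_cancel hu hufin]
      rw [Set.indicator_of_mem (Set.mem_Icc.2 ⟨hsu, hut.le⟩)]
  · -- u = t
    have hsub : Set.Icc (zeta ξ η u) (zeta ξ η u + (μ {u}).toReal)
        ⊆ Set.Icc (zeta ξ η s) v := by
      intro x hx
      exact ⟨le_trans ((zeta_mono ξ η) hst) hx.1, le_trans hx.2 (htv hu)⟩
    rw [Set.inter_eq_self_of_subset_right hsub, Real.volume_Icc]
    have : zeta ξ η u + (μ {u}).toReal - zeta ξ η u = (μ {u}).toReal := by ring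
    rw [this, ENNReal.ofReal_toReal hufin, ENNReal.inv_mul_cancel hu hufin]
    rw [Set.indicator_of_mem (Set.mem_Icc.2 ⟨hst, le_rfl⟩)]
  · -- t < u : intersection empty
    have hsub : Set.Icc (zeta ξ η s) v
        ∩ Set.Icc (zeta ξ η u) (zeta ξ η u + (μ {u}).toReal) = ∅ := by
      ext x
      simp only [Set.mem_inter_iff, Set.mem_Icc, Set.mem_empty_iff_false, iff_false]
      rintro ⟨⟨h1, h2⟩, h3, h4⟩
      have := hvt u hut hu
      linarith
    rw [hsub]
    simp only [measure_empty, mul_zero]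
    rw [Set.indicator_of_notMem (fun h => absurd (Set.mem_Icc.1 h).2 (not_le.2 hut))]

end Eval

section Eval2

variable (ξ η : Measure ℝ) [IsLocallyFiniteMeasure ξ] [IsLocallyFiniteMeasure η]
variable (μ : Measure ℝ) [IsLocallyFiniteMeasure μ]
variable {s t : ℝ}

lemma starK_eval_Ico (hst : s ≤ t)
    (hatom : ∀ u t', u < t' → zeta ξ η u + (μ {u}).toReal ≤ zeta ξ η t')
    {u : ℝ} (hu : μ {u} ≠ 0) :
    starK ξ η μ u (Set.Icc (zeta ξ η s) (zeta ξ η t))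
      = Set.indicator (Set.Ico s t) (fun _ => (1:ENNReal)) u := by
  have hufin : μ {u} ≠ ⊤ := measure_singleton_ne_top μ u
  have ha : (0:ℝ) ≤ (μ {u}).toReal := ENNReal.toReal_nonneg
  rw [starK_apply ξ η μ u measurableSet_Icc]
  rcases lt_or_ge u s with hus | hsu
  · have hsub : Set.Icc (zeta ξ η s) (zeta ξ η t)
        ∩ Set.Icc (zeta ξ η u) (zeta ξ η u + (μ {u}).toReal) ⊆ {zeta ξ η s} := by
      intro x hx
      have h3 : zeta ξ η u + (μ {u}).toReal ≤ zeta ξ η s := hatom u s hus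
      have : x = zeta ξ η s := le_antisymm (le_trans hx.2.2 h3) hx.1.1
      simp [this]
    have hvol : volume (Set.Icc (zeta ξ η s) (zeta ξ η t)
        ∩ Set.Icc (zeta ξ η u) (zeta ξ η u + (μ {u}).toReal)) = 0 :=
      le_antisymm (le_trans (measure_mono hsub) (by simp)) bot_le
    rw [hvol, mul_zero,
      Set.indicator_of_notMem (fun h => absurd (Set.mem_Ico.1 h).1 (not_le.2 hus))]
  · rcases lt_or_ge u t with hut | htu
    · have hsub : Set.Icc (zeta ξ η u) (zeta ξ η u + (μ {u}).toReal)
          ⊆ Set.Icc (zeta ξ η s) (zeta ξ η t) := by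
        intro x hx
        exact ⟨le_trans ((zeta_mono ξ η) hsu) hx.1, le_trans hx.2 (hatom u t hut)⟩
      rw [Set.inter_eq_self_of_subset_right hsub, Real.volume_Icc]
      have he : zeta ξ η u + (μ {u}).toReal - zeta ξ η u = (μ {u}).toReal := by ring
      rw [he, ENNReal.ofReal_toReal hufin, ENNReal.inv_mul_cancel hu hufin]
      rw [Set.indicator_of_mem (Set.mem_Ico.2 ⟨hsu, hut⟩)]
    · have hsub : Set.Icc (zeta ξ η s) (zeta ξ η t)
          ∩ Set.Icc (zeta ξ η u) (zeta ξ η u + (μ {u}).toReal) ⊆ {zeta ξ η t} := by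
        intro x hx
        have : x = zeta ξ η t :=
          le_antisymm hx.1.2 (le_trans ((zeta_mono ξ η) htu) hx.2.1)
        simp [this]
      have hvol : volume (Set.Icc (zeta ξ η s) (zeta ξ η t)
          ∩ Set.Icc (zeta ξ η u) (zeta ξ η u + (μ {u}).toReal)) = 0 :=
        le_antisymm (le_trans (measure_mono hsub) (by simp)) bot_le
      rw [hvol, mul_zero,
        Set.indicator_of_notMem (fun h => absurd (Set.mem_Ico.1 h).2 (not_lt.2 htu))]

variable [SigmaFinite μ]

lemma bind_eval_Ico (hst : s ≤ t)
    (hatom : ∀ u t', u < t' → zeta ξ η u + (μ {u}).toReal ≤ zeta ξ η t') :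
    ∫⁻ u, starK ξ η μ u (Set.Icc (zeta ξ η s) (zeta ξ η t)) ∂(atomicPart μ)
      = atomicPart μ (Set.Ico s t) := by
  have hae : ∀ᵐ u ∂(atomicPart μ), u ∈ {t : ℝ | μ {t} ≠ 0} := by
    rw [atomicPart]
    exact ae_restrict_mem (atoms_measurable μ)
  rw [← lintegral_indicator_one (μ := atomicPart μ) measurableSet_Ico]
  exact lintegral_congr_ae (hae.mono fun u hu => starK_eval_Ico ξ η μ hst hatom hu)

lemma bind_eval_Icc (hst : s ≤ t)
    (hatom : ∀ u t', u < t' → zeta ξ η u + (μ {u}).toReal ≤ zeta ξ η t')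
    (htv : ∀ u : ℝ, zeta ξ η u + (μ {u}).toReal ≤ zetaR ξ η u) :
    ∫⁻ u, starK ξ η μ u (Set.Icc (zeta ξ η s) (zetaR ξ η t)) ∂(atomicPart μ)
      = atomicPart μ (Set.Icc s t) := by
  have hae : ∀ᵐ u ∂(atomicPart μ), u ∈ {t : ℝ | μ {t} ≠ 0} := by
    rw [atomicPart]
    exact ae_restrict_mem (atoms_measurable μ)
  rw [← lintegral_indicator_one (μ := atomicPart μ) measurableSet_Icc]
  refine lintegral_congr_ae (hae.mono fun u hu => ?_)
  refine starK_eval ξ η μ hst (zeta_le_zetaR ξ η t) hatom ?_ (fun _ => htv t) hu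
  intro w hw hwne
  have h1 := zetaR_add_le_zeta ξ η hw
  linarith

lemma starM_Icc_zeta (hμs : μ {s} = 0) (hst : s ≤ t)
    (hatom : ∀ u t', u < t' → zeta ξ η u + (μ {u}).toReal ≤ zeta ξ η t') :
    starM ξ η μ (Set.Icc (zeta ξ η s) (zeta ξ η t)) = μ (Set.Ioo s t) := by
  rw [starM_eq ξ η μ measurableSet_Icc, zeta_preimage_Icc ξ η,
    bind_eval_Ico ξ η μ hst hatom]
  have h1 : diffusePart μ (Set.Icc s t) = diffusePart μ (Set.Ioo s t) := by
    refine (measure_eq_measure_of_null_diff Set.Ioo_subset_Icc_self ?_).symm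
    refine measure_mono_null (fun x hx => ?_) (?_ : diffusePart μ ({s} ∪ {t}) = 0)
    · rcases hx with ⟨⟨ha, hb⟩, hc⟩
      rw [Set.mem_Ioo] at hc
      push_neg at hc
      rcases eq_or_lt_of_le ha with h | h
      · exact Or.inl h.symm
      · exact Or.inr (le_antisymm hb (hc h))
    · rw [measure_union_null_iff]
      exact ⟨diffusePart_singleton μ s, diffusePart_singleton μ t⟩
  have h2 : atomicPart μ (Set.Ico s t) = atomicPart μ (Set.Ioo s t) := by
    refine (measure_eq_measure_of_null_diff Set.Ioo_subset_Ico_self ?_).symm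
    refine measure_mono_null (fun x hx => ?_) (?_ : atomicPart μ {s} = 0)
    · rcases hx with ⟨⟨ha, hb⟩, hc⟩
      rw [Set.mem_Ioo] at hc
      push_neg at hc
      rcases eq_or_lt_of_le ha with h | h
      · exact h.symm
      · exact absurd hb (not_lt.2 (hc h))
    · rw [atomicPart_singleton μ s]
      exact hμs
  rw [h1, h2, parts_add μ measurableSet_Ioo]

lemma starM_Icc_zetaR (hst : s ≤ t)
    (hatom : ∀ u t', u < t' → zeta ξ η u + (μ {u}).toReal ≤ zeta ξ η t')
    (htv : ∀ u : ℝ, zeta ξ η u + (μ {u}).toReal ≤ zetaR ξ η u) :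
    starM ξ η μ (Set.Icc (zeta ξ η s) (zetaR ξ η t)) = μ (Set.Icc s t) := by
  rw [starM_eq ξ η μ measurableSet_Icc, zeta_preimage_IccR ξ η hst,
    bind_eval_Icc ξ η μ hst hatom htv, parts_add μ measurableSet_Icc]

end Eval2

lemma Icc_eq_Ioo_of_null (ν : Measure ℝ) {s t : ℝ} (hs : ν {s} = 0) (ht : ν {t} = 0) :
    ν (Set.Icc s t) = ν (Set.Ioo s t) := by
  refine (measure_eq_measure_of_null_diff Set.Ioo_subset_Icc_self ?_).symm
  refine measure_mono_null (fun x hx => ?_) (?_ : ν ({s} ∪ {t}) = 0)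
  · rcases hx with ⟨⟨ha, hb⟩, hc⟩
    rw [Set.mem_Ioo] at hc
    push_neg at hc
    rcases eq_or_lt_of_le ha with h | h
    · exact Or.inl h.symm
    · exact Or.inr (le_antisymm hb (hc h))
  · rw [measure_union_null_iff]
    exact ⟨hs, ht⟩

lemma lt_zeta_of_zetaInv_lt (ξ η : Measure ℝ) [IsLocallyFiniteMeasure ξ]
    [IsLocallyFiniteMeasure η] {r u : ℝ} (h : zetaInv ξ η r < u) : r < zeta ξ η u := by
  rw [zetaInv] at h
  obtain ⟨w, hw, hwu⟩ := exists_lt_of_csInf_lt (zetaSet_nonempty ξ η r) h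
  exact lt_of_le_of_lt hw ((zeta_strictMono ξ η) hwu)

lemma sInf_image_eq_top_iff {S : Set ℝ} : sInf (Real.toEReal '' S) = ⊤ ↔ S = ∅ := by
  constructor
  · intro h
    by_contra hne
    obtain ⟨a, ha⟩ := Set.nonempty_iff_ne_empty.2 hne
    have h2 := sInf_le (Set.mem_image_of_mem Real.toEReal ha)
    rw [h, top_le_iff] at h2
    exact EReal.coe_ne_top a h2
  · rintro rfl
    rw [Set.image_empty, sInf_empty]

example (μ : Measure ℝ) [IsLocallyFiniteMeasure μ] : SigmaFinite μ := by infer_instance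

theorem tauStar_zeta_of_not_atom' (ξ η : Measure ℝ)
    [IsLocallyFiniteMeasure ξ] [IsLocallyFiniteMeasure η]
    (hsing : ξ.MutuallySingular η) (s : ℝ) (hξs : ξ {s} = 0) (hηs : η {s} = 0) :
    (tauStar ξ η (zeta ξ η s) ≠ ⊤ ↔ tauU ξ η 0 s ≠ ⊤) ∧
      (∀ r : ℝ, tauStar ξ η (zeta ξ η s) = (r : EReal) →
        ((zetaInv ξ η r : ℝ) : EReal) = tauU ξ η 0 s) := by
  obtain ⟨S, hSm, hS1, hS2⟩ := hsing
  have hdisj : ∀ u : ℝ, ξ {u} = 0 ∨ η {u} = 0 := by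
    intro u
    by_cases hu : u ∈ S
    · exact Or.inl (le_antisymm
        (le_trans (measure_mono (Set.singleton_subset_iff.2 hu)) hS1.le) bot_le)
    · exact Or.inr (le_antisymm
        (le_trans (measure_mono (Set.singleton_subset_iff.2 hu)) hS2.le) bot_le)
  have hatomξ : ∀ u t' : ℝ, u < t' → zeta ξ η u + (ξ {u}).toReal ≤ zeta ξ η t' := by
    intro u t' h
    have h1 := zetaR_add_le_zeta ξ η h
    rw [zetaR] at h1
    have h2 : (0:ℝ) ≤ (η {u}).toReal := ENNReal.toReal_nonneg
    linarith
  have hatomη : ∀ u t' : ℝ, u < t' → zeta ξ η u + (η {u}).toReal ≤ zeta ξ η t' := by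
    intro u t' h
    have h1 := zetaR_add_le_zeta ξ η h
    rw [zetaR] at h1
    have h2 : (0:ℝ) ≤ (ξ {u}).toReal := ENNReal.toReal_nonneg
    linarith
  have htvξ : ∀ u : ℝ, zeta ξ η u + (ξ {u}).toReal ≤ zetaR ξ η u := by
    intro u
    rw [zetaR]
    have : (0:ℝ) ≤ (η {u}).toReal := ENNReal.toReal_nonneg
    linarith
  have htvη : ∀ u : ℝ, zeta ξ η u + (η {u}).toReal ≤ zetaR ξ η u := by
    intro u
    rw [zetaR]
    have : (0:ℝ) ≤ (ξ {u}).toReal := ENNReal.toReal_nonneg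
    linarith
  set A := {t : ℝ | s < t ∧ ξ (Set.Ioo s t) ≤ η (Set.Icc s t)} with hA
  set B := {v : ℝ | zeta ξ η s < v ∧ starM ξ η ξ (Set.Icc (zeta ξ η s) v)
    ≤ starM ξ η η (Set.Icc (zeta ξ η s) v)} with hB
  have htauU : tauU ξ η 0 s = sInf (Real.toEReal '' A) := by
    rw [tauU, hA]
    congr 2
    ext t
    simp
  have htauStar : tauStar ξ η (zeta ξ η s) = sInf (Real.toEReal '' B) := rfl
  -- A → B
  have hAtoB : ∀ t ∈ A, ∃ v, v ∈ B ∧ zetaInv ξ η v = t := by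
    rintro t ⟨hst, hle⟩
    rcases hdisj t with hξt | hηt
    · refine ⟨zetaR ξ η t, ⟨?_, ?_⟩, zetaInv_zetaR ξ η t⟩
      · exact lt_of_lt_of_le ((zeta_strictMono ξ η) hst) (zeta_le_zetaR ξ η t)
      · rw [starM_Icc_zetaR ξ η ξ hst.le hatomξ htvξ,
          starM_Icc_zetaR ξ η η hst.le hatomη htvη,
          Icc_eq_Ioo_of_null ξ hξs hξt]
        exact hle
    · refine ⟨zeta ξ η t, ⟨(zeta_strictMono ξ η) hst, ?_⟩, zetaInv_zeta ξ η t⟩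
      rw [starM_Icc_zeta ξ η ξ hξs hst.le hatomξ,
        starM_Icc_zeta ξ η η hηs hst.le hatomη]
      exact le_trans hle (le_of_eq (Icc_eq_Ioo_of_null η hηs hηt))
  -- B → A
  have hBtoA : ∀ v ∈ B, zetaInv ξ η v ∈ A := by
    rintro v ⟨hv1, hv2⟩
    have hst : s < zetaInv ξ η v := zetaInv_gt ξ η hξs hηs hv1
    have hz1 : zeta ξ η (zetaInv ξ η v) ≤ v := zeta_zetaInv_le ξ η v
    have hz2 : v ≤ zetaR ξ η (zetaInv ξ η v) := le_zetaR_zetaInv ξ η v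
    refine ⟨hst, ?_⟩
    calc ξ (Set.Ioo s (zetaInv ξ η v))
        = starM ξ η ξ (Set.Icc (zeta ξ η s) (zeta ξ η (zetaInv ξ η v))) :=
          (starM_Icc_zeta ξ η ξ hξs hst.le hatomξ).symm
      _ ≤ starM ξ η ξ (Set.Icc (zeta ξ η s) v) :=
          measure_mono (Set.Icc_subset_Icc_right hz1)
      _ ≤ starM ξ η η (Set.Icc (zeta ξ η s) v) := hv2
      _ ≤ starM ξ η η (Set.Icc (zeta ξ η s) (zetaR ξ η (zetaInv ξ η v))) :=
          measure_mono (Set.Icc_subset_Icc_right hz2)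
      _ = η (Set.Icc s (zetaInv ξ η v)) :=
          starM_Icc_zetaR ξ η η hst.le hatomη htvη
  constructor
  · rw [htauU, htauStar, ne_eq, ne_eq, sInf_image_eq_top_iff, sInf_image_eq_top_iff,
      not_iff_not]
    constructor
    · intro hBe
      by_contra hne
      obtain ⟨t, ht⟩ := Set.nonempty_iff_ne_empty.2 hne
      obtain ⟨v, hv, -⟩ := hAtoB t ht
      rw [hBe] at hv
      simpa using hv
    · intro hAe
      by_contra hne
      obtain ⟨v, hv⟩ := Set.nonempty_iff_ne_empty.2 hne
      have := hBtoA v hv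
      rw [hAe] at this
      simpa using this
  · intro r hr
    rw [htauStar] at hr
    have hBne : B.Nonempty := by
      rw [Set.nonempty_iff_ne_empty]
      intro h
      rw [h] at hr
      rw [Set.image_empty, sInf_empty] at hr
      exact EReal.coe_ne_top r hr.symm
    have hrleB : ∀ v ∈ B, r ≤ v := by
      intro v hv
      have := sInf_le (Set.mem_image_of_mem Real.toEReal hv)
      rw [hr] at this
      exact_mod_cast this
    rw [htauU]
    refine le_antisymm ?_ ?_
    · refine le_sInf ?_
      rintro b ⟨t, ht, rfl⟩
      obtain ⟨v, hvB, hvInv⟩ := hAtoB t ht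
      have h1 : zetaInv ξ η r ≤ zetaInv ξ η v := zetaInv_mono ξ η (hrleB v hvB)
      rw [hvInv] at h1
      exact_mod_cast h1
    · have hAne : A.Nonempty := by
        obtain ⟨v, hv⟩ := hBne
        exact ⟨zetaInv ξ η v, hBtoA v hv⟩
      have hub : ∀ ε : ℝ, 0 < ε →
          sInf (Real.toEReal '' A) ≤ ((zetaInv ξ η r + ε : ℝ) : EReal) := by
        intro ε hε
        have hζ : r < zeta ξ η (zetaInv ξ η r + ε) :=
          lt_zeta_of_zetaInv_lt ξ η (by linarith)
        have hlt : sInf (Real.toEReal '' B)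
            < ((zeta ξ η (zetaInv ξ η r + ε) : ℝ) : EReal) := by
          rw [hr]
          exact_mod_cast hζ
        obtain ⟨b, hbB, hblt⟩ := sInf_lt_iff.1 hlt
        obtain ⟨v, hvB, rfl⟩ := hbB
        have hvlt : v < zeta ξ η (zetaInv ξ η r + ε) := by exact_mod_cast hblt
        have htA : zetaInv ξ η v ∈ A := hBtoA v hvB
        have hle2 : zetaInv ξ η v ≤ zetaInv ξ η r + ε := zetaInv_le ξ η hvlt.le
        refine le_trans (sInf_le (Set.mem_image_of_mem Real.toEReal htA)) ?_
        exact_mod_cast hle2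
      set L := sInf (Real.toEReal '' A) with hL
      have hLtop : L ≠ ⊤ := by
        rw [hL, ne_eq, sInf_image_eq_top_iff]
        exact Set.nonempty_iff_ne_empty.1 hAne
      have hLbot : L ≠ ⊥ := by
        have hlb : ((min s 0 : ℝ) : EReal) ≤ L := by
          refine le_sInf ?_
          rintro b ⟨t, ht, rfl⟩
          have h1 : s < t := ht.1
          have : min s 0 ≤ t := le_trans (min_le_left s 0) h1.le
          exact_mod_cast this
        exact fun h => by rw [h] at hlb; exact absurd hlb (by simp [EReal.bot_lt_coe])
      have hLr : L = ((L.toReal : ℝ) : EReal) := (EReal.coe_toReal hLtop hLbot).symm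
      rw [hLr]
      have hreal : L.toReal ≤ zetaInv ξ η r := by
        refine le_of_forall_pos_le_add (fun ε hε => ?_)
        have := hub ε hε
        rw [hLr] at this
        exact_mod_cast this
      exact_mod_cast hreal

end AuxLemmas

/-- Lemma 3.4: if `ξ{s} = η{s} = 0`, then `τ*(ζ(s)) < ∞` iff `τ⁰(s) < ∞`, and in that case
`ζ⁻¹(τ*(ζ(s))) = τ⁰(s)`. -/
theorem tauStar_zeta_of_not_atom (ξ η : Measure ℝ)
    [IsLocallyFiniteMeasure ξ] [IsLocallyFiniteMeasure η]
    (hsing : ξ ⟂ₘ η) (s : ℝ) (hξs : ξ {s} = 0) (hηs : η {s} = 0) :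
    (tauStar ξ η (zeta ξ η s) ≠ ⊤ ↔ tauU ξ η 0 s ≠ ⊤) ∧
      (∀ r : ℝ, tauStar ξ η (zeta ξ η s) = (r : EReal) →
        ((zetaInv ξ η r : ℝ) : EReal) = tauU ξ η 0 s) := by
  exact tauStar_zeta_of_not_atom' ξ η hsing s hξs hηs
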